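/- For all natural numbers n and m with m ≤ n, one has the identity of real numbers (−1/(4m−1)) · (C(4m,2m)/4^{2m}) · C(2m,m) · choose(−2m + 1/2, n−m) = ((−1)^{n−1}/(2n−1)) · (C(2n,n)/4^n) · choose(−n + 1/2, m) · C(n, n−m), where choose(r, k) = (∏_{j=0}^{k−1}(r − j))/k! is the generalized binomial coefficient for real r and natural k. -/

import Mathlib

/-- Generalized binomial coefficient `r(r−1)⋯(r−k+1)/k!` for real `r` and natural `k`. -/
noncomputable def gchoose (r : ℝ) (k : ℕ) : ℝ :=
  (∏ j ∈ Finset.range k, (r - j)) / (Nat.factorial k)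

lemma gchoose_zero (r : ℝ) : gchoose r 0 = 1 := by simp [gchoose]

lemma gchoose_succ (r : ℝ) (k : ℕ) :
    gchoose r (k + 1) = gchoose r k * (r - k) / (k + 1) := by
  have hf : (Nat.factorial k : ℝ) ≠ 0 := Nat.cast_ne_zero.mpr (Nat.factorial_ne_zero k)
  have hk : ((k : ℝ) + 1) ≠ 0 := by positivity
  simp only [gchoose, Finset.prod_range_succ, Nat.factorial_succ]
  push_cast
  rw [div_mul_eq_mul_div, div_div, mul_comm ((k : ℝ) + 1)]

lemma gchoose_shift (r : ℝ) (m : ℕ) :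
    gchoose (r - 1) m * r = gchoose r m * (r - m) := by
  induction m with
  | zero => simp [gchoose_zero]
  | succ k ih =>
    rw [gchoose_succ, gchoose_succ]
    push_cast
    linear_combination ((r - 1 - (k : ℝ)) / ((k : ℝ) + 1)) * ih

lemma odd_ne (k : ℕ) : (2 * (k : ℝ) - 1) ≠ 0 := by
  intro h
  have h2 : ((2 * k : ℕ) : ℝ) = ((1 : ℕ) : ℝ) := by push_cast; linarith
  have h3 : 2 * k = 1 := Nat.cast_inj.mp h2
  omega

lemma four_ne (m : ℕ) : (4 * (m : ℝ) - 1) ≠ 0 := by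
  have h := odd_ne (2 * m)
  push_cast at h
  intro h0; exact h (by linarith)

lemma sign_eq (n : ℕ) : ((-1 : ℝ)) ^ ((n : ℤ) - 1) = -(-1 : ℝ) ^ n := by
  rw [zpow_sub₀ (by norm_num : (-1 : ℝ) ≠ 0), zpow_natCast, zpow_one]
  simp [div_neg]

lemma cb_succ (n : ℕ) :
    ((n : ℝ) + 1) * (Nat.choose (2 * (n + 1)) (n + 1) : ℝ)
      = 2 * (2 * (n : ℝ) + 1) * (Nat.choose (2 * n) n : ℝ) := by
  have h := Nat.succ_mul_centralBinom_succ n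
  simp only [Nat.centralBinom] at h
  exact_mod_cast h

lemma choose_succ_real (n m : ℕ) (h : m ≤ n) :
    (Nat.choose (n + 1) m : ℝ) * ((n : ℝ) + 1 - m) = ((n : ℝ) + 1) * (Nat.choose n m : ℝ) := by
  have h1 := Nat.choose_mul_succ_eq n m
  have h2 : ((n + 1 - m : ℕ) : ℝ) = (n : ℝ) + 1 - m := by
    rw [Nat.cast_sub (by omega : m ≤ n + 1)]; push_cast; ring
  have h1' : (Nat.choose n m : ℝ) * ((n : ℝ) + 1) = (Nat.choose (n + 1) m : ℝ) * ((n : ℝ) + 1 - m) := by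
    rw [← h2]; exact_mod_cast h1
  linarith [h1']

lemma gchoose_closed (m : ℕ) :
    gchoose (-(m : ℝ) + 1 / 2) m
      = (-1 : ℝ) ^ m * (2 * (m : ℝ) - 1) * (Nat.choose (4 * m) (2 * m) : ℝ) * 4 ^ m /
        ((4 * (m : ℝ) - 1) * 4 ^ (2 * m)) := by
  induction m with
  | zero => norm_num [gchoose_zero]
  | succ k ih =>
    have hr : (-(k : ℝ) + 1 / 2) ≠ 0 := by
      have := odd_ne k; intro h; exact this (by linarith)
    have hshift : gchoose ((-(k : ℝ) + 1 / 2) - 1) k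
        = gchoose (-(k : ℝ) + 1 / 2) k * ((-(k : ℝ) + 1 / 2) - k) / (-(k : ℝ) + 1 / 2) := by
      rw [eq_div_iff hr]; exact gchoose_shift _ k
    have hstep : gchoose (-((k : ℝ) + 1) + 1 / 2) (k + 1)
        = gchoose ((-(k : ℝ) + 1 / 2) - 1) k * ((-(k : ℝ) + 1 / 2) - 1 - k) / ((k : ℝ) + 1) := by
      rw [show -((k : ℝ) + 1) + 1 / 2 = (-(k : ℝ) + 1 / 2) - 1 from by ring, gchoose_succ]
    have h1 := cb_succ (2 * k)
    have h2 := cb_succ (2 * k + 1)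
    rw [show 2 * (2 * k + 1 + 1) = 4 * (k + 1) from by ring,
        show 2 * k + 1 + 1 = 2 * (k + 1) from by ring] at h2
    rw [show 2 * (2 * k) = 4 * k from by ring] at h1
    have hA : ((2 * (k : ℝ) + 1) * (2 * (k : ℝ) + 2)) * (Nat.choose (4 * (k + 1)) (2 * (k + 1)) : ℝ)
        = 4 * (4 * (k : ℝ) + 1) * (4 * (k : ℝ) + 3) * (Nat.choose (4 * k) (2 * k) : ℝ) := by
      push_cast at h1 h2
      linear_combination (2 * (k : ℝ) + 1) * h2 + 2 * (4 * (k : ℝ) + 3) * h1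
    have hA' : (Nat.choose (4 * (k + 1)) (2 * (k + 1)) : ℝ)
        = 4 * (4 * (k : ℝ) + 1) * (4 * (k : ℝ) + 3) * (Nat.choose (4 * k) (2 * k) : ℝ) /
          ((2 * (k : ℝ) + 1) * (2 * (k : ℝ) + 2)) := by
      rw [eq_div_iff (by positivity)]; linear_combination hA
    have hk1 : ((k : ℝ) + 1) ≠ 0 := by positivity
    have h41 : (4 * (k : ℝ) - 1) ≠ 0 := four_ne k
    have hk0 : (0 : ℝ) ≤ (k : ℝ) := k.cast_nonneg
    have h43 : (4 * ((k : ℝ) + 1) - 1) ≠ 0 := by intro h; linarith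
    have hq1 : (2 * (k : ℝ) + 1) ≠ 0 := by positivity
    have hq2 : (2 * (k : ℝ) + 2) ≠ 0 := by positivity
    push_cast
    rw [show ((4:ℝ)) ^ (2 * (k+1)) = ((4:ℝ) ^ (k+1)) ^ 2 from by rw [mul_comm, pow_mul]]
    rw [show ((4:ℝ)) ^ (2 * k) = ((4:ℝ) ^ k) ^ 2 from by rw [mul_comm, pow_mul]] at ih
    rw [eq_div_iff (mul_ne_zero h43 (by positivity))]
    -- multiplicative forms
    have hs1 : gchoose (-((k : ℝ) + 1) + 1 / 2) (k + 1) * ((k : ℝ) + 1)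
        = gchoose ((-(k : ℝ) + 1 / 2) - 1) k * ((-(k : ℝ) + 1 / 2) - 1 - k) := by
      rw [hstep, div_mul_cancel₀ _ hk1]
    have hs2 := gchoose_shift (-(k : ℝ) + 1 / 2) k
    have ihm : gchoose (-(k : ℝ) + 1 / 2) k * ((4 * (k : ℝ) - 1) * ((4:ℝ) ^ k) ^ 2)
        = (-1 : ℝ) ^ k * (2 * (k : ℝ) - 1) * (Nat.choose (4 * k) (2 * k) : ℝ) * 4 ^ k := by
      rw [ih, div_mul_cancel₀]
      exact mul_ne_zero h41 (by positivity)
    have e1 : gchoose (-((k : ℝ) + 1) + 1 / 2) (k + 1) * (((k : ℝ) + 1) * (-(k : ℝ) + 1 / 2))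
        = gchoose (-(k : ℝ) + 1 / 2) k * ((-(k : ℝ) + 1 / 2) - k) * ((-(k : ℝ) + 1 / 2) - 1 - k) := by
      linear_combination (-(k : ℝ) + 1 / 2) * hs1 + ((-(k : ℝ) + 1 / 2) - 1 - k) * hs2
    have e2 : gchoose (-((k : ℝ) + 1) + 1 / 2) (k + 1) *
          (((k : ℝ) + 1) * (-(k : ℝ) + 1 / 2) * ((4 * (k : ℝ) - 1) * ((4:ℝ) ^ k) ^ 2))
        = (-1 : ℝ) ^ k * (2 * (k : ℝ) - 1) * (Nat.choose (4 * k) (2 * k) : ℝ) * 4 ^ k *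
          ((-(k : ℝ) + 1 / 2) - k) * ((-(k : ℝ) + 1 / 2) - 1 - k) := by
      linear_combination ((4 * (k : ℝ) - 1) * ((4:ℝ) ^ k) ^ 2) * e1 +
        (((-(k : ℝ) + 1 / 2) - k) * ((-(k : ℝ) + 1 / 2) - 1 - k)) * ihm
    refine mul_right_cancel₀ (b := ((k : ℝ) + 1) * (-(k : ℝ) + 1 / 2) * (4 * (k : ℝ) - 1) *
      ((2 * (k : ℝ) + 1) * (2 * (k : ℝ) + 2))) (by
        exact mul_ne_zero (mul_ne_zero (mul_ne_zero hk1 hr) h41) (mul_ne_zero hq1 hq2)) ?_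
    linear_combination (16 * (4 * (k : ℝ) + 3) * (2 * (k : ℝ) + 1) * (2 * (k : ℝ) + 2)) * e2 +
      ((-1 : ℝ) ^ k * (2 * ((k : ℝ) + 1) - 1) * 4 ^ (k + 1) *
        (((k : ℝ) + 1) * (-(k : ℝ) + 1 / 2) * (4 * (k : ℝ) - 1))) * hA

lemma cleared (m n : ℕ) (hmn : m ≤ n) :
    -((Nat.choose (4 * m) (2 * m) : ℝ)) * (Nat.choose (2 * m) m : ℝ) *
        gchoose (-2 * (m : ℝ) + 1 / 2) (n - m) * ((2 * (n : ℝ) - 1) * 4 ^ n)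
      = -(-1 : ℝ) ^ n * (Nat.choose (2 * n) n : ℝ) * gchoose (-(n : ℝ) + 1 / 2) m *
        (Nat.choose n m : ℝ) * ((4 * (m : ℝ) - 1) * 4 ^ (2 * m)) := by
  induction n, hmn using Nat.le_induction with
  | base =>
    rw [Nat.sub_self, gchoose_zero, gchoose_closed, Nat.choose_self]
    have h1 := four_ne m
    have h3 : ((4:ℝ) ^ (2 * m)) ≠ 0 := by positivity
    push_cast
    rcases Nat.even_or_odd m with he | ho
    · rw [he.neg_one_pow]; field_simp
      rw [mul_div_assoc, div_self (by rwa [mul_comm] : (m:ℝ) * 4 - 1 ≠ 0), mul_one]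
    · rw [ho.neg_one_pow]; field_simp
      rw [mul_div_assoc, div_self (by rwa [mul_comm] : (m:ℝ) * 4 - 1 ≠ 0), mul_one]
  | succ n hmn ih =>
    have hmr : (m : ℝ) ≤ (n : ℝ) := Nat.cast_le.mpr hmn
    have hr : (-(n : ℝ) + 1 / 2) ≠ 0 := by
      have := odd_ne n; intro h; exact this (by linarith)
    have hn1 : ((n : ℝ) + 1) ≠ 0 := by positivity
    have hnm1 : ((n : ℝ) - m + 1) ≠ 0 := by intro h; linarith
    have hnm' : ((n : ℝ) + 1 - m) ≠ 0 := by intro h; linarith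
    have h2n1 : (2 * (n : ℝ) - 1) ≠ 0 := odd_ne n
    -- multiplicative facts
    have hs : gchoose (-2 * (m : ℝ) + 1 / 2) ((n - m) + 1) * ((n : ℝ) - m + 1)
        = gchoose (-2 * (m : ℝ) + 1 / 2) (n - m) * ((-2 * (m : ℝ) + 1 / 2) - ((n : ℝ) - m)) := by
      rw [gchoose_succ, Nat.cast_sub hmn, div_mul_cancel₀ _ hnm1]
    have hg : gchoose (-((n : ℝ) + 1) + 1 / 2) m * (-(n : ℝ) + 1 / 2)
        = gchoose (-(n : ℝ) + 1 / 2) m * ((-(n : ℝ) + 1 / 2) - m) := by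
      rw [show -((n : ℝ) + 1) + 1 / 2 = (-(n : ℝ) + 1 / 2) - 1 from by ring]
      exact gchoose_shift _ m
    have hB := cb_succ n
    have hD := choose_succ_real n m hmn
    have t1 : (Nat.choose (2 * (n + 1)) (n + 1) : ℝ) * gchoose (-((n : ℝ) + 1) + 1 / 2) m *
          (((n : ℝ) + 1) * (-(n : ℝ) + 1 / 2))
        = 2 * (2 * (n : ℝ) + 1) * (Nat.choose (2 * n) n : ℝ) * gchoose (-(n : ℝ) + 1 / 2) m *
          ((-(n : ℝ) + 1 / 2) - m) := by
      linear_combination (gchoose (-((n : ℝ) + 1) + 1 / 2) m * (-(n : ℝ) + 1 / 2)) * hB +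
        (2 * (2 * (n : ℝ) + 1) * (Nat.choose (2 * n) n : ℝ)) * hg
    have t2 : (Nat.choose (2 * (n + 1)) (n + 1) : ℝ) * gchoose (-((n : ℝ) + 1) + 1 / 2) m *
          (Nat.choose (n + 1) m : ℝ) * (((n : ℝ) + 1) * (-(n : ℝ) + 1 / 2) * ((n : ℝ) + 1 - m))
        = 2 * (2 * (n : ℝ) + 1) * (Nat.choose (2 * n) n : ℝ) * gchoose (-(n : ℝ) + 1 / 2) m *
          ((-(n : ℝ) + 1 / 2) - m) * (((n : ℝ) + 1) * (Nat.choose n m : ℝ)) := by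
      linear_combination ((Nat.choose (n + 1) m : ℝ) * ((n : ℝ) + 1 - m)) * t1 +
        (2 * (2 * (n : ℝ) + 1) * (Nat.choose (2 * n) n : ℝ) * gchoose (-(n : ℝ) + 1 / 2) m *
          ((-(n : ℝ) + 1 / 2) - m)) * hD
    push_cast
    rw [show n + 1 - m = (n - m) + 1 from by omega]
    refine mul_right_cancel₀ (b := ((n : ℝ) - m + 1) * (((n : ℝ) + 1) * (-(n : ℝ) + 1 / 2) *
        ((n : ℝ) + 1 - m)) * (2 * (n : ℝ) - 1))
      (mul_ne_zero (mul_ne_zero hnm1 (mul_ne_zero (mul_ne_zero hn1 hr) hnm')) h2n1) ?_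
    linear_combination
      (-(Nat.choose (4 * m) (2 * m) : ℝ) * (Nat.choose (2 * m) m : ℝ) * (2 * ((n : ℝ) + 1) - 1) *
        4 ^ (n + 1) * (((n : ℝ) + 1) * (-(n : ℝ) + 1 / 2) * ((n : ℝ) + 1 - m)) *
        (2 * (n : ℝ) - 1)) * hs +
      ((-1 : ℝ) ^ (n + 1) * (4 * (m : ℝ) - 1) * 4 ^ (2 * m) * ((n : ℝ) - m + 1) *
        (2 * (n : ℝ) - 1)) * t2 +
      (((-2 * (m : ℝ) + 1 / 2) - ((n : ℝ) - m)) * (2 * ((n : ℝ) + 1) - 1) * 4 * (((n : ℝ) + 1) *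
        (-(n : ℝ) + 1 / 2) * ((n : ℝ) + 1 - m))) * ih

/-- The coefficient identity from Step 2: for `m ≤ n`,
`(−1/(4m−1)) (C(4m,2m)/4^{2m}) C(2m,m) choose(−2m+1/2, n−m)
  = ((−1)^{n−1}/(2n−1)) (C(2n,n)/4^n) choose(−n+1/2, m) C(n, n−m)`. -/
theorem step_two_coefficient_identity (n m : ℕ) (hmn : m ≤ n) :
    (-1 / (4 * (m : ℝ) - 1)) * ((Nat.choose (4 * m) (2 * m) : ℝ) / 4 ^ (2 * m)) *
      (Nat.choose (2 * m) m : ℝ) * gchoose (-2 * (m : ℝ) + 1 / 2) (n - m)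
    = ((-1 : ℝ) ^ ((n : ℤ) - 1) / (2 * (n : ℝ) - 1)) * ((Nat.choose (2 * n) n : ℝ) / 4 ^ n) *
      gchoose (-(n : ℝ) + 1 / 2) m * (Nat.choose n (n - m) : ℝ) := by
  have h := cleared m n hmn
  rw [sign_eq, Nat.choose_symm hmn]
  have h1 := four_ne m
  have h2 := odd_ne n
  have h3 : ((4:ℝ) ^ (2 * m)) ≠ 0 := by positivity
  have h4 : ((4:ℝ) ^ n) ≠ 0 := by positivity
  set a1 := gchoose (-2 * (m : ℝ) + 1 / 2) (n - m) with ha1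
  set a2 := gchoose (-(n : ℝ) + 1 / 2) m with ha2
  field_simp
  linear_combination h
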